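/- Let n ≥ 2, A ∈ M_n(ℂ), and let i ≠ j be indices in {1,…,n}. Then [B_i, B_j] = A_{ij}·E_{ij}(A+I) − A_{ji}·E_{ji}(A+I). Consequently, if A_{ij} = 0 and A_{ji} = 0 then B_i and B_j commute; and conversely, if A_{ii} ≠ −1, A_{jj} ≠ −1 and [B_i, B_j] = 0, then A_{ij} = 0 and A_{ji} = 0. -/

import Mathlib

/-- For `A ∈ Mₙ(ℂ)`, `Bₖ := -Eₖ(A+I)`. For `i ≠ j`:
`[Bᵢ, Bⱼ] = A_{ij}·E_{ij}(A+I) − A_{ji}·E_{ji}(A+I)`; consequently if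
`A_{ij} = A_{ji} = 0` then `Bᵢ, Bⱼ` commute, and conversely if
`A_{ii} ≠ -1`, `A_{jj} ≠ -1` and `[Bᵢ,Bⱼ] = 0` then `A_{ij} = A_{ji} = 0`. -/
lemma key_aux {n : ℕ} (k l : Fin n) (M : Matrix (Fin n) (Fin n) ℂ) :
    (Matrix.single k k (1 : ℂ) * M) * (Matrix.single l l (1 : ℂ) * M)
      = M k l • (Matrix.single k l 1 * M) := by
  ext a b
  simp [Matrix.mul_apply, Matrix.single, ite_and, Finset.sum_ite_eq, Finset.mul_sum,
    mul_assoc]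

lemma entry_aux {n : ℕ} (k l a b : Fin n) (M : Matrix (Fin n) (Fin n) ℂ) :
    (Matrix.single k l (1 : ℂ) * M) a b = if a = k then M l b else 0 := by
  simp [Matrix.mul_apply, Matrix.single, ite_and, Finset.sum_ite_eq, eq_comm]


theorem stmt0 {n : ℕ} (hn : 2 ≤ n) (A : Matrix (Fin n) (Fin n) ℂ)
    (i j : Fin n) (hij : i ≠ j)
    (B : Fin n → Matrix (Fin n) (Fin n) ℂ)
    (hB : ∀ k, B k = -(Matrix.single k k (1 : ℂ) * (A + 1))) :
    B i * B j - B j * B i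
        = A i j • (Matrix.single i j (1 : ℂ) * (A + 1))
          - A j i • (Matrix.single j i (1 : ℂ) * (A + 1))
      ∧ (A i j = 0 → A j i = 0 → B i * B j = B j * B i)
      ∧ (A i i ≠ -1 → A j j ≠ -1 → B i * B j - B j * B i = 0 →
          A i j = 0 ∧ A j i = 0) := by
  have hA : ∀ a b : Fin n, a ≠ b → (A + 1) a b = A a b := by
    intro a b hab
    simp [Matrix.one_apply_ne hab]
  have hmain : B i * B j - B j * B i
      = A i j • (Matrix.single i j (1 : ℂ) * (A + 1))
        - A j i • (Matrix.single j i (1 : ℂ) * (A + 1)) := by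
    rw [hB i, hB j, neg_mul_neg, neg_mul_neg, key_aux, key_aux,
      hA i j hij, hA j i hij.symm]
  refine ⟨hmain, ?_, ?_⟩
  · intro h1 h2
    have := hmain
    rw [h1, h2] at this
    simpa [sub_eq_zero] using this
  · intro hii hjj hcomm
    rw [hmain] at hcomm
    constructor
    · have := congrFun (congrFun hcomm i) j
      simp [entry_aux, hij, hij.symm, Matrix.one_apply_ne] at this
      rcases this with h | h
      · exact h
      · exact absurd (by linear_combination h) hjj
    · have := congrFun (congrFun hcomm j) i
      simp [entry_aux, hij, hij.symm, Matrix.one_apply_ne] at this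
      rcases this with h | h
      · exact h
      · exact absurd (by linear_combination h) hii
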